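/- Let p_1, …, p_n be points in ℝ^d and let x* be the point of minimum Euclidean norm in conv{p_1, …, p_n}. Then there exists a subset C ⊆ {p_1, …, p_n} of affinely independent points such that x* lies in the relative interior of conv C and x* is the point of minimum Euclidean norm in the affine hull of C; in particular, C is a corral whose affine minimizer is x*. -/

import Mathlib

open InnerProductSpace

/-- A finite set `S` of affinely independent points is a *corral* if the point of minimum
Euclidean norm in the affine hull of `S` (the affine minimizer) lies in the relative interior
of the convex hull of `S`. -/
def IsCorral {d : ℕ} (S : Set (EuclideanSpace ℝ (Fin d))) : Prop :=
  S.Finite ∧ AffineIndependent ℝ ((↑) : S → EuclideanSpace ℝ (Fin d)) ∧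
    ∃ m : EuclideanSpace ℝ (Fin d), m ∈ affineSpan ℝ S ∧
      (∀ w ∈ affineSpan ℝ S, ‖m‖ ≤ ‖w‖) ∧
      m ∈ intrinsicInterior ℝ (convexHull ℝ S)

private lemma aux1 (a nv eps del : ℝ) (ha : 0 ≤ a) (hnv : 0 ≤ nv) (hdel : 0 < del)
    (h : del * (a * nv + 1) ≤ eps) : del * a * nv < eps := by nlinarith

private lemma aux2 (c del nv : ℝ) (hc2 : 0 < c^2) (hdel : 0 < del) (hnv : 0 ≤ nv)
    (hd1 : del * (nv^2 + 1) ≤ 1)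
    (key : 0 ≤ 2*((-del)*c)*c + ((-del)*c)^2*nv^2) : False := by
  nlinarith [mul_pos hdel hc2, sq_nonneg (del*c*nv)]

set_option maxHeartbeats 1000000 in
/-- If `x*` is the minimum norm point of `conv{p_1, …, p_n}`, then there is a subset
`C ⊆ {p_1, …, p_n}` of affinely independent points such that `x*` lies in the relative interior
of `conv C` and `x*` is the minimum norm point of the affine hull of `C`; in particular `C` is
a corral whose affine minimizer is `x*`. -/
theorem stmt_8 (d n : ℕ) (p : Fin n → EuclideanSpace ℝ (Fin d))
    (x : EuclideanSpace ℝ (Fin d))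
    (hxmem : x ∈ convexHull ℝ (Set.range p))
    (hxmin : ∀ w ∈ convexHull ℝ (Set.range p), ‖x‖ ≤ ‖w‖) :
    ∃ C : Set (EuclideanSpace ℝ (Fin d)), C ⊆ Set.range p ∧
      AffineIndependent ℝ ((↑) : C → EuclideanSpace ℝ (Fin d)) ∧
      x ∈ intrinsicInterior ℝ (convexHull ℝ C) ∧
      x ∈ affineSpan ℝ C ∧ (∀ w ∈ affineSpan ℝ C, ‖x‖ ≤ ‖w‖) ∧
      IsCorral C := by
  classical
  obtain ⟨ι, hfi, z, w, hzs, hzind, hwpos, hwsum, hwx⟩ :=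
    eq_pos_convex_span_of_mem_convexHull hxmem
  let E := EuclideanSpace ℝ (Fin d)
  set C : Set E := Set.range z with hC
  set A := affineSpan ℝ C with hA
  set D := A.direction with hD
  have hιne : Nonempty ι := by
    by_contra h
    rw [not_nonempty_iff] at h
    rw [Finset.sum_eq_zero (fun i _ => (h.elim i))] at hwsum
    norm_num at hwsum
  have hxC : x ∈ convexHull ℝ C := by
    rw [← hwx, ← Finset.univ.centerMass_eq_of_sum_1 z hwsum]
    exact Finset.univ.centerMass_mem_convexHull (fun i _ => (hwpos i).le)
      (by rw [hwsum]; norm_num) (fun i _ => Set.mem_range_self i)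
  have hxA : x ∈ A := by
    have := subset_affineSpan ℝ (convexHull ℝ C) hxC
    rwa [affineSpan_convexHull] at this
  have hzA : ∀ i, z i ∈ A := fun i => subset_affineSpan ℝ C ⟨i, rfl⟩
  let q : ι → D := fun i => ⟨z i - x, by
    simpa using AffineSubspace.vsub_mem_direction (hzA i) hxA⟩
  let φ : D →ᵃⁱ[ℝ] E :=
    (AffineIsometryEquiv.constVAdd ℝ E x).toAffineIsometry.comp D.subtypeₗᵢ.toAffineIsometry
  have hφ : ∀ v : D, φ v = x + ↑v := fun v => by
    simp [φ, AffineIsometryEquiv.constVAdd]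
    rfl
  have hφq : ∀ i, φ (q i) = z i := fun i => by rw [hφ]; simp [q]
  have hφcomp : ⇑φ ∘ q = z := funext hφq
  have hqind : AffineIndependent ℝ q := by
    exact AffineIndependent.of_comp φ.toAffineMap (by rwa [show ⇑φ.toAffineMap ∘ q = z from hφcomp])
  have himg : ⇑φ '' (convexHull ℝ (Set.range q)) = convexHull ℝ C := by
    rw [show ⇑φ = ⇑φ.toAffineMap from rfl, AffineMap.image_convexHull, ← Set.range_comp]
    rw [show ⇑φ.toAffineMap ∘ q = z from hφcomp, hC]
  have htot : affineSpan ℝ (Set.range q) = ⊤ := by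
    rw [eq_top_iff]
    rintro v -
    have h1 : x + ↑v ∈ A := by
      have := AffineSubspace.vadd_mem_of_mem_direction v.2 hxA
      simpa [add_comm] using this
    have h2 : A = (affineSpan ℝ (Set.range q)).map φ.toAffineMap := by
      rw [AffineSubspace.map_span, ← Set.range_comp,
        show ⇑φ.toAffineMap ∘ q = z from hφcomp, hA, hC]
    rw [h2] at h1
    obtain ⟨u, hu, huv⟩ := h1
    have : u = v := by
      apply Subtype.ext
      have huv' : x + ↑u = x + ↑v := by
        rw [show φ.toAffineMap u = x + ↑u from hφ u] at huv; exact huv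
      exact add_left_cancel huv'
    rwa [← this]
  let b : AffineBasis ι ℝ D := ⟨q, hqind, htot⟩
  have h0 : (Finset.univ.affineCombination ℝ q w : D) = 0 := by
    rw [Finset.univ.affineCombination_eq_linear_combination q w hwsum]
    apply Subtype.ext
    calc ((∑ i, w i • q i : D) : E) = ∑ i, w i • (z i - x) := by
          push_cast
          rfl
      _ = (∑ i, w i • z i) - (∑ i, w i) • x := by
          simp [smul_sub, Finset.sum_sub_distrib, Finset.sum_smul]
      _ = 0 := by rw [hwx, hwsum, one_smul, sub_self]
  have h0int : (0 : D) ∈ interior (convexHull ℝ (Set.range q)) := by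
    rw [show (Set.range q) = Set.range ⇑b from rfl, b.interior_convexHull]
    intro i
    have : b.coord i (Finset.univ.affineCombination ℝ q w) = w i :=
      b.coord_apply_combination_of_mem (Finset.mem_univ i) hwsum
    rw [h0] at this
    rw [this]
    exact hwpos i
  have hxint : x ∈ intrinsicInterior ℝ (convexHull ℝ C) := by
    have h1 : (0 : D) ∈ intrinsicInterior ℝ (convexHull ℝ (Set.range q)) :=
      interior_subset_intrinsicInterior h0int
    have h2 : x ∈ ⇑φ '' intrinsicInterior ℝ (convexHull ℝ (Set.range q)) :=
      ⟨0, h1, by rw [hφ]; simp⟩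
    rwa [← AffineIsometry.image_intrinsicInterior, himg] at h2
  obtain ⟨ε, εpos, hball⟩ := Metric.mem_nhds_iff.mp (mem_interior_iff_mem_nhds.mp h0int)
  have hperp : ∀ v : E, v ∈ D → (inner ℝ x v : ℝ) = 0 := by
    intro v hv
    have hstep : ∀ t : ℝ, |t| * ‖v‖ < ε →
        0 ≤ 2*t*(inner ℝ x v : ℝ) + t^2*‖v‖^2 := by
      intro t ht
      have hmem : (t • (⟨v, hv⟩ : D)) ∈ Metric.ball (0 : D) ε := by
        rw [mem_ball_zero_iff, norm_smul]
        exact ht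
      have h2 : x + t • v ∈ convexHull ℝ C := by
        have h3 : φ (t • ⟨v, hv⟩) ∈ ⇑φ '' convexHull ℝ (Set.range q) :=
          Set.mem_image_of_mem _ (hball hmem)
        rw [himg] at h3
        rw [hφ] at h3
        exact h3
      have h4 : ‖x‖ ≤ ‖x + t • v‖ :=
        hxmin _ (convexHull_mono hzs h2)
      have h5 : ‖x + t • v‖^2 = ‖x‖^2 + 2*(inner ℝ x (t • v) : ℝ) + ‖t • v‖^2 :=
        norm_add_sq_real x (t • v)
      have h6 : (inner ℝ x (t • v) : ℝ) = t * (inner ℝ x v : ℝ) := real_inner_smul_right x v t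
      have h7 : ‖t • v‖ = |t| * ‖v‖ := by rw [norm_smul, Real.norm_eq_abs]
      nlinarith [norm_nonneg (x + t • v), norm_nonneg x, sq_abs t]
    by_contra hc
    have hc2 : 0 < (inner ℝ x v : ℝ)^2 := pow_two_pos_of_ne_zero hc
    obtain ⟨δ, hδpos, hd1, hd2⟩ : ∃ δ : ℝ, 0 < δ ∧ δ * (‖v‖^2 + 1) ≤ 1 ∧
        δ * (|(inner ℝ x v : ℝ)| * ‖v‖ + 1) ≤ ε :=
      ⟨min (1/(‖v‖^2+1)) (ε/(|(inner ℝ x v : ℝ)| * ‖v‖+1)),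
        lt_min (by positivity) (by positivity),
        (le_div_iff₀ (by positivity)).mp (min_le_left _ _),
        (le_div_iff₀ (by positivity)).mp (min_le_right _ _)⟩
    have habs : |(-δ)*(inner ℝ x v : ℝ)| * ‖v‖ < ε := by
      rw [abs_mul, abs_neg, abs_of_pos hδpos]
      exact aux1 _ _ _ _ (abs_nonneg _) (norm_nonneg _) hδpos hd2
    exact aux2 _ _ _ hc2 hδpos (norm_nonneg v) hd1 (hstep _ habs)
  have hmin : ∀ y ∈ affineSpan ℝ C, ‖x‖ ≤ ‖y‖ := by
    intro y hy
    have hv : y - x ∈ D := by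
      simpa using AffineSubspace.vsub_mem_direction hy hxA
    have h0' := hperp _ hv
    have h5 : ‖x + (y - x)‖^2 = ‖x‖^2 + 2*(inner ℝ x (y-x) : ℝ) + ‖y-x‖^2 :=
      norm_add_sq_real x (y - x)
    rw [add_sub_cancel] at h5
    nlinarith [norm_nonneg (y - x), norm_nonneg y, norm_nonneg x]
  exact ⟨C, hzs, hzind.range, hxint, hxA, hmin,
    Set.finite_range z, hzind.range, x, hxA, hmin, hxint⟩
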